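/- All four eigenvalues e₁ = 8x(1−x²)(1+x²)²/(1+2x−x²)⁴, e₂ = 8x(1−x²)(1+x²)²/(1−6x²+x⁴)², e₃ = 8x(1+x²)²(−1+4x+x²)/(1+2x−x²)⁴, and e₄ = 8x(1+x²)²(3−6x+2x²+6x³+3x⁴)/((1+2x−x²)³(1+2x+x²)²) are simultaneously strictly positive if and only if x lies in the open interval (√5 − 2, √2 − 1), assuming x ∈ (0, √2 − 1). -/
import Mathlib


theorem stmt_4 (x : ℝ) (hx0 : 0 < x) (hx1 : x < Real.sqrt 2 - 1) :
    (0 < 8 * x * (1 - x ^ 2) * (1 + x ^ 2) ^ 2 / (1 + 2 * x - x ^ 2) ^ 4 ∧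
     0 < 8 * x * (1 - x ^ 2) * (1 + x ^ 2) ^ 2 / (1 - 6 * x ^ 2 + x ^ 4) ^ 2 ∧
     0 < 8 * x * (1 + x ^ 2) ^ 2 * (-1 + 4 * x + x ^ 2) / (1 + 2 * x - x ^ 2) ^ 4 ∧
     0 < 8 * x * (1 + x ^ 2) ^ 2 * (3 - 6 * x + 2 * x ^ 2 + 6 * x ^ 3 + 3 * x ^ 4) /
         ((1 + 2 * x - x ^ 2) ^ 3 * (1 + 2 * x + x ^ 2) ^ 2)) ↔
    (Real.sqrt 5 - 2 < x ∧ x < Real.sqrt 2 - 1) := by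
  have hs2 : Real.sqrt 2 ^ 2 = 2 := Real.sq_sqrt (by norm_num)
  have hs5 : Real.sqrt 5 ^ 2 = 5 := Real.sq_sqrt (by norm_num)
  have hs5pos : 0 < Real.sqrt 5 := Real.sqrt_pos.mpr (by norm_num)
  have hsq : (x + 1) ^ 2 < 2 := by
    have h1 : x + 1 < Real.sqrt 2 := by linarith
    nlinarith [Real.sqrt_nonneg 2]
  have hxlt : x < 1 := by nlinarith
  have hd1 : 0 < 1 + 2 * x - x ^ 2 := by nlinarith
  have hd1' : 0 < (1 + 2 * x - x ^ 2) ^ 4 := by positivity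
  have hd2 : 0 < 1 - 6 * x ^ 2 + x ^ 4 := by nlinarith [sq_nonneg (1 - x^2), sq_nonneg x]
  have hnum : 0 < 8 * x * (1 + x ^ 2) ^ 2 := by positivity
  constructor
  · rintro ⟨-, -, h3, -⟩
    refine ⟨?_, hx1⟩
    have h5 : 0 < -1 + 4 * x + x ^ 2 := by
      by_contra h
      push_neg at h
      have : 8 * x * (1 + x ^ 2) ^ 2 * (-1 + 4 * x + x ^ 2) ≤ 0 :=
        mul_nonpos_of_nonneg_of_nonpos (le_of_lt hnum) h
      have := div_nonpos_of_nonpos_of_nonneg this (le_of_lt hd1')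
      linarith
    -- -1+4x+x^2 > 0 ⟺ (x+2)^2 > 5 ⟺ x+2 > √5
    nlinarith [hs5pos, hs5, sq_nonneg (x + 2 - Real.sqrt 5)]
  · rintro ⟨h5, -⟩
    have h5' : 0 < -1 + 4 * x + x ^ 2 := by nlinarith [hs5pos, hs5]
    refine ⟨?_, ?_, ?_, ?_⟩
    · apply div_pos; nlinarith; exact hd1'
    · apply div_pos; nlinarith; positivity
    · exact div_pos (by positivity) hd1'
    · apply div_pos
      · have : 0 < 3 - 6 * x + 2 * x ^ 2 + 6 * x ^ 3 + 3 * x ^ 4 := by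
          nlinarith [sq_nonneg (1 - x), sq_nonneg x, sq_nonneg (x - x^2)]
        positivity
      · positivity
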